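/- Let δ > 0 and r > 0, and for each integer j ≥ 1 set x_j = (0,0,δ/j) ∈ ℝ³. Then there exist C > 0 and an integer J ≥ 1, depending only on δ and r, such that for all j ≥ J: ∫_{B_r(0) ∩ {x₃ < 0}} |x| · |∂_{x₃} Φ₀(x, x_j)|² dx ≥ C·log j. In particular these weighted L² integrals of the hypersingular kernel ∇_xΦ₀(x,x_j)·ν(x₀) over the interior half-ball diverge logarithmically as j → ∞, which forces the vanishing of the first and second order derivatives of the refractive index difference at the boundary in the uniqueness proof. -/

import Mathlib

noncomputable section

open Real MeasureTheory Metric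

/-- Euclidean space `ℝ³`. -/
abbrev E3 := EuclideanSpace ℝ (Fin 3)

/-- The fundamental solution `Φ₀(x,y) = 1/(4π|x−y|)` of the Laplacian in `ℝ³`. -/
def Phi0 (x y : E3) : ℝ := 1 / (4 * Real.pi * ‖x - y‖)

/-- The exterior source points `x_j = (0,0,δ/j)`. -/
def xj (δ : ℝ) (j : ℕ) : E3 := EuclideanSpace.single (2 : Fin 3) (δ / j)

lemma coord_le_norm (v : E3) (i : Fin 3) : |v i| ≤ ‖v‖ := by
  have h := abs_real_inner_le_norm v (EuclideanSpace.single i (1:ℝ))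
  simpa [EuclideanSpace.inner_single_right] using h

lemma phi0_deriv (y x : E3) (hxy : x ≠ y) :
    fderiv ℝ (fun z => Phi0 z y) x (EuclideanSpace.single 2 1)
      = -((x - y) 2) / (4 * Real.pi * ‖x - y‖ ^ 3) := by
  have hne : x - y ≠ 0 := sub_ne_zero.mpr hxy
  have hn : ‖x - y‖ ≠ 0 := norm_ne_zero_iff.mpr hne
  have hnpos : 0 < ‖x - y‖ := norm_pos_iff.mpr hne
  have h1 := ((hasFDerivAt_id x).sub_const y).norm_sq
  simp only [id_eq] at h1
  have hs : (‖x - y‖ ^ 2 : ℝ) ≠ 0 := pow_ne_zero _ hn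
  have hsq : Real.sqrt (‖x - y‖ ^ 2) = ‖x - y‖ := Real.sqrt_sq (norm_nonneg _)
  have h2 : HasDerivAt (fun s : ℝ => (Real.sqrt s)⁻¹)
      (-(1 / (2 * Real.sqrt (‖x - y‖ ^ 2))) / (Real.sqrt (‖x - y‖ ^ 2)) ^ 2)
      (‖x - y‖ ^ 2) :=
    (hasDerivAt_sqrt hs).inv (by rw [hsq]; exact hn)
  have h3 := h2.comp_hasFDerivAt x h1
  have h4 := h3.const_mul ((4 * Real.pi)⁻¹)
  have key : (fun z => Phi0 z y)
      = fun z => (4 * Real.pi)⁻¹ * ((fun s : ℝ => (Real.sqrt s)⁻¹) ∘ (fun z : E3 => ‖z - y‖ ^ 2)) z := by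
    funext z
    simp [Phi0, Function.comp, Real.sqrt_sq (norm_nonneg _), one_div, mul_inv]
    ring
  rw [key, h4.fderiv]
  simp only [ContinuousLinearMap.coe_smul', Pi.smul_apply, ContinuousLinearMap.smul_apply,
    ContinuousLinearMap.coe_comp', Function.comp_apply, ContinuousLinearMap.coe_id', id_eq,
    innerSL_apply_apply, smul_eq_mul]
  rw [hsq]
  rw [EuclideanSpace.inner_single_right]
  have : (starRingEnd ℝ) ((x - y) 2) = (x - y) 2 := rfl
  rw [this]
  field_simp
  ring

lemma ball_facts {t : ℝ} (htp : 0 < t) {x : E3}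
    (hx : x ∈ ball (EuclideanSpace.single (2:Fin 3) (-(2*t))) (t/2)) :
    x 2 < -(3*t/2) ∧ -(5*t/2) < x 2 ∧ ‖x‖ < 5*t/2 ∧ 3*t/2 < ‖x‖ := by
  set c : E3 := EuclideanSpace.single (2:Fin 3) (-(2*t)) with hcdef
  have hd : ‖x - c‖ < t/2 := by simpa [mem_ball, dist_eq_norm] using hx
  have hcnorm : ‖c‖ = 2*t := by
    rw [hcdef, EuclideanSpace.norm_single, Real.norm_eq_abs, abs_neg, abs_of_pos (by positivity)]
  have hc2 : c 2 = -(2*t) := by simp [hcdef, EuclideanSpace.single_apply]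
  have hsub2 : (x - c) 2 = x 2 - c 2 := rfl
  have hcoord : |x 2 - c 2| < t/2 := by
    rw [← hsub2]; exact lt_of_le_of_lt (coord_le_norm _ _) hd
  have hnn : |‖x‖ - ‖c‖| ≤ ‖x - c‖ := abs_norm_sub_norm_le x c
  rw [abs_lt] at hcoord
  rw [abs_le] at hnn
  rw [hc2] at hcoord
  rw [hcnorm] at hnn
  refine ⟨by linarith, by linarith, by linarith, by linarith⟩


set_option maxHeartbeats 2000000 in
/-- Let `δ > 0` and `r > 0`.  Then there exist `C > 0` and an integer
`J ≥ 1`, depending only on `δ` and `r`, such that for all `j ≥ J`: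
`∫_{B_r(0) ∩ {x₃ < 0}} |x|·|∂_{x₃} Φ₀(x, x_j)|² dx ≥ C·log j`.  In particular these
weighted `L²` integrals of the hypersingular kernel over the interior half-ball diverge
logarithmically as `j → ∞`. -/
theorem hypersingular_weighted_log_growth (δ r : ℝ) (hδ : 0 < δ) (hr : 0 < r) :
    ∃ C > 0, ∃ J : ℕ, 1 ≤ J ∧ ∀ j : ℕ, J ≤ j →
      C * Real.log j ≤
        ∫ x in ball (0 : E3) r ∩ {x : E3 | x 2 < 0},
          ‖x‖ * |fderiv ℝ (fun z => Phi0 z (xj δ j)) x (EuclideanSpace.single 2 1)| ^ 2 := by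
  set r0 : ℝ := r / 4 with hr0def
  have hr0 : 0 < r0 := by positivity
  obtain ⟨m, hm'⟩ := exists_nat_gt (δ / r0)
  have hm : δ ≤ r0 * 2 ^ m := by
    have hcast : (m:ℝ) ≤ (2:ℝ)^m := by exact_mod_cast (Nat.lt_two_pow_self (n := m)).le
    rw [div_lt_iff₀ hr0] at hm'
    nlinarith
  set V : ℝ := (volume (ball (0:E3) 1)).toReal with hV
  have hVpos : 0 < V :=
    ENNReal.toReal_pos (measure_ball_pos volume _ one_pos).ne' measure_ball_lt_top.ne
  set c0 : ℝ := (16 * Real.pi ^ 2 * (7/2:ℝ) ^ 6)⁻¹ with hc0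
  have hpi := Real.pi_pos
  have hc0pos : 0 < c0 := by positivity
  set c1 : ℝ := c0 * V / 8 with hc1
  have hc1pos : 0 < c1 := by positivity
  have hl2 : 0 < Real.log 2 := Real.log_pos one_lt_two
  refine ⟨c1 / (2 * Real.log 2), by positivity, 2 ^ (2 * m),
    Nat.one_le_two_pow, ?_⟩
  intro j hj
  have hj0 : 0 < j := lt_of_lt_of_le (Nat.pow_pos (by norm_num)) hj
  have hjR : (1:ℝ) ≤ (j:ℕ) := by exact_mod_cast hj0
  have hjRpos : (0:ℝ) < j := by exact_mod_cast hj0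
  have hε : 0 < δ / j := div_pos hδ hjRpos
  set y : E3 := xj δ j with hy
  have hy2 : y 2 = δ / j := by simp [hy, xj, EuclideanSpace.single_apply]
  have hynorm : ‖y‖ = δ / j := by
    rw [hy, xj, EuclideanSpace.norm_single, Real.norm_eq_abs, abs_of_pos hε]
  set N := Nat.log 2 j with hN
  have hmN : m ≤ N := by
    have h2m : 2 ^ m ≤ j := le_trans (Nat.pow_le_pow_right (by norm_num) (by omega)) hj
    exact (Nat.le_log_iff_pow_le one_lt_two hj0.ne').mpr h2m
  set K := N - m with hK
  set g : E3 → ℝ := fun x => ‖x‖ * ((x - y) 2 / (4 * Real.pi * ‖x - y‖ ^ 3)) ^ 2 with hg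
  have hgnn : ∀ x, 0 ≤ g x := fun x => mul_nonneg (norm_nonneg _) (sq_nonneg _)
  set A : Set E3 := ball (0 : E3) r ∩ {x : E3 | x 2 < 0} with hA
  have hprojc : Continuous fun v : E3 => v 2 := (EuclideanSpace.proj (2:Fin 3)).continuous
  have hAmeas : MeasurableSet A :=
    measurableSet_ball.inter (measurableSet_lt hprojc.measurable measurable_const)
  have hsubapp : ∀ x : E3, (x - y) 2 = x 2 - δ / j := by
    intro x; have : (x - y) 2 = x 2 - y 2 := rfl; rw [this, hy2]
  -- congruence with explicit formula
  have hEq : Set.EqOn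
      (fun x : E3 => ‖x‖ * |fderiv ℝ (fun z => Phi0 z (xj δ j)) x (EuclideanSpace.single 2 1)| ^ 2)
      g A := by
    intro x hx
    have hx2 : x 2 < 0 := hx.2
    have hxy : x ≠ y := by
      intro h
      rw [h, hy2] at hx2
      linarith
    show ‖x‖ * |fderiv ℝ (fun z => Phi0 z y) x (EuclideanSpace.single 2 1)| ^ 2 = g x
    rw [phi0_deriv y x hxy, hg]
    rw [neg_div, abs_neg, sq_abs]
  -- measurability of g
  have hgmeas : Measurable g := by
    have hc1' : Continuous fun x : E3 => (x - y) 2 := hprojc.comp (continuous_sub_right y)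
    have hc2' : Continuous fun x : E3 => 4 * Real.pi * ‖x - y‖ ^ 3 :=
      continuous_const.mul (((continuous_id.sub continuous_const).norm).pow 3)
    exact measurable_norm.mul ((hc1'.measurable.div hc2'.measurable).pow_const 2)
  -- integrability of g on A
  have hAfin : volume A ≠ ⊤ :=
    ((measure_mono Set.inter_subset_left).trans_lt measure_ball_lt_top).ne
  have hgInt : IntegrableOn g A := by
    apply Measure.integrableOn_of_bounded (M := r * (1 / (4 * Real.pi * (δ/j)^2))^2) hAfin
      hgmeas.aestronglyMeasurable
    apply ae_restrict_of_forall_mem hAmeas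
    intro x hx
    have hx2 : x 2 < 0 := hx.2
    have hxr : ‖x‖ < r := by simpa [mem_ball, dist_zero_right] using hx.1
    have hsep : δ / j ≤ ‖x - y‖ := by
      have h1 : δ / j ≤ |(x - y) 2| := by
        rw [hsubapp x, abs_of_neg (by linarith)]
        linarith
      exact h1.trans (coord_le_norm _ _)
    have hnpos : (0:ℝ) < ‖x - y‖ := lt_of_lt_of_le hε hsep
    have hq : ((x - y) 2 / (4 * Real.pi * ‖x - y‖ ^ 3)) ^ 2
        ≤ (1 / (4 * Real.pi * (δ/j)^2))^2 := by
      rw [← sq_abs]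
      apply pow_le_pow_left₀ (abs_nonneg _)
      rw [abs_div, abs_of_pos (mul_pos (by positivity : (0:ℝ) < 4 * Real.pi) (pow_pos hnpos 3))]
      calc |(x - y) 2| / (4 * Real.pi * ‖x - y‖ ^ 3)
          ≤ ‖x - y‖ / (4 * Real.pi * ‖x - y‖ ^ 3) := by
            apply (div_le_div_iff_of_pos_right (by positivity)).mpr (coord_le_norm _ _)
        _ = 1 / (4 * Real.pi * ‖x - y‖ ^ 2) := by
            field_simp
        _ ≤ 1 / (4 * Real.pi * (δ/j)^2) := by
            apply one_div_le_one_div_of_le (by positivity)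
            have h2 := pow_le_pow_left₀ hε.le hsep 2
            nlinarith
    have : ‖g x‖ = g x := Real.norm_of_nonneg (hgnn x)
    rw [this, hg]
    exact mul_le_mul hxr.le hq (sq_nonneg _) hr.le
  -- the family of balls
  set t : ℕ → ℝ := fun k => r0 / 2 ^ k with ht
  have htpos : ∀ k, 0 < t k := fun k => by positivity
  set B : ℕ → Set E3 := fun k => ball (EuclideanSpace.single (2:Fin 3) (-(2 * t k))) (t k / 2) with hB
  have hsubA : ∀ k, B k ⊆ A := by
    intro k x hx
    obtain ⟨h1, h2, h3, h4⟩ := ball_facts (htpos k) hx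
    have h2k : (1:ℝ) ≤ 2 ^ k := one_le_pow₀ (by norm_num)
    have htk : t k ≤ r0 := by
      rw [ht]
      exact div_le_self hr0.le h2k
    constructor
    · rw [mem_ball_zero_iff]
      have : r0 = r / 4 := hr0def
      linarith
    · show x 2 < 0
      have := htpos k
      linarith
  have hdisjphase : ∀ k l, k < l → Disjoint (B k) (B l) := by
    intro k l hkl
    rw [Set.disjoint_left]
    intro x hxk hxl
    obtain ⟨hk1, _, _, _⟩ := ball_facts (htpos k) hxk
    obtain ⟨_, hl2, _, _⟩ := ball_facts (htpos l) hxl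
    have htll : t l ≤ t k / 2 := by
      rw [ht]
      have hle : (2:ℝ)^(k+1) ≤ 2^l := pow_le_pow_right₀ (by norm_num) (by omega)
      have : r0 / 2^l ≤ r0 / 2^(k+1) := by
        apply div_le_div_of_nonneg_left hr0.le (by positivity) hle
      calc r0 / 2^l ≤ r0 / 2^(k+1) := this
        _ = r0 / 2^k / 2 := by rw [pow_succ]; ring
    have := htpos k
    linarith
  have hdisj : Set.Pairwise ↑(Finset.range (K+1)) (Function.onFun Disjoint B) := by
    intro k _ l _ hkl
    rcases lt_or_gt_of_ne hkl with h | h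
    · exact hdisjphase k l h
    · exact (hdisjphase l k h).symm
  -- δ/j ≤ t k for k ≤ K
  have heps_le : ∀ k ≤ K, δ / j ≤ t k := by
    intro k hk
    rw [ht]
    rw [div_le_div_iff₀ hjRpos (by positivity)]
    have h2N : ((2:ℝ))^N ≤ j := by exact_mod_cast Nat.pow_log_le_self 2 hj0.ne'
    have hkN : (2:ℝ)^k * 2^m ≤ 2^N := by
      rw [← pow_add]
      apply pow_le_pow_right₀ (by norm_num)
      omega
    have h2mpos : (0:ℝ) < 2^m := by positivity
    have h2kpos : (0:ℝ) < 2^k := by positivity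
    calc δ * 2^k ≤ (r0 * 2^m) * 2^k := mul_le_mul_of_nonneg_right hm h2kpos.le
      _ = r0 * (2^k * 2^m) := by ring
      _ ≤ r0 * 2^N := mul_le_mul_of_nonneg_left hkN hr0.le
      _ ≤ r0 * j := mul_le_mul_of_nonneg_left h2N hr0.le
  -- pointwise lower bound on each ball
  have hglow : ∀ k, k ≤ K → ∀ x ∈ B k, c0 / t k ^ 3 ≤ g x := by
    intro k hk x hx
    obtain ⟨h1, h2, h3, h4⟩ := ball_facts (htpos k) hx
    have htk := htpos k
    have hnum : t k ^ 2 ≤ ((x - y) 2)^2 := by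
      have hle : (x - y) 2 ≤ -(t k) := by
        rw [hsubapp x]
        linarith
      calc t k ^ 2 ≤ (-((x - y) 2)) ^ 2 := pow_le_pow_left₀ htk.le (by linarith) 2
        _ = ((x - y) 2) ^ 2 := by ring
    have hnrm : ‖x - y‖ ≤ 7 * t k / 2 := by
      calc ‖x - y‖ ≤ ‖x‖ + ‖y‖ := norm_sub_le x y
        _ ≤ 5 * t k / 2 + t k := by
            have := heps_le k hk
            rw [hynorm]
            linarith
        _ = 7 * t k / 2 := by ring
    have hnpos : 0 < ‖x - y‖ := by
      have hxy : x ≠ y := by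
        intro h
        have : x 2 = δ / j := by rw [h, hy2]
        linarith
      exact norm_pos_iff.mpr (sub_ne_zero.mpr hxy)
    have hden : (4 * Real.pi * ‖x - y‖ ^ 3)^2 ≤ 16 * Real.pi^2 * (7/2:ℝ)^6 * (t k)^6 := by
      have h6 : ‖x - y‖^3 ≤ (7 * t k / 2)^3 := pow_le_pow_left₀ (norm_nonneg _) hnrm 3
      calc (4 * Real.pi * ‖x - y‖ ^ 3)^2 = 16 * Real.pi^2 * (‖x - y‖^3)^2 := by ring
        _ ≤ 16 * Real.pi^2 * ((7 * t k / 2)^3)^2 := by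
            apply mul_le_mul_of_nonneg_left
              (pow_le_pow_left₀ (pow_nonneg (norm_nonneg _) 3) h6 2) (by positivity)
        _ = 16 * Real.pi^2 * (7/2:ℝ)^6 * (t k)^6 := by ring
    have hfrac : t k^2 / (16 * Real.pi^2 * (7/2:ℝ)^6 * (t k)^6)
        ≤ ((x - y) 2)^2 / (4 * Real.pi * ‖x - y‖ ^ 3)^2 :=
      div_le_div₀ (sq_nonneg _) hnum (by positivity) hden
    have hfrac' : t k^2 / (16 * Real.pi^2 * (7/2:ℝ)^6 * (t k)^6)
        ≤ ((x - y) 2 / (4 * Real.pi * ‖x - y‖ ^ 3)) ^ 2 := by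
      calc t k^2 / (16 * Real.pi^2 * (7/2:ℝ)^6 * (t k)^6)
          ≤ ((x - y) 2)^2 / (4 * Real.pi * ‖x - y‖ ^ 3)^2 := hfrac
        _ = ((x - y) 2 / (4 * Real.pi * ‖x - y‖ ^ 3)) ^ 2 := (div_pow _ _ _).symm
    have hrw : c0 / t k^3 = t k * (t k^2 / (16 * Real.pi^2 * (7/2:ℝ)^6 * (t k)^6)) := by
      rw [hc0]
      field_simp
    refine le_trans (le_of_eq hrw) ?_
    refine mul_le_mul ?_ hfrac' ?_ (norm_nonneg _)
    · linarith
    · positivity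
  -- volume of the balls and per-ball integral bound
  have hball : ∀ k, k ≤ K → c1 ≤ ∫ x in B k, g x := by
    intro k hk
    have htk := htpos k
    have hvol : (volume (B k)).toReal = (t k / 2)^3 * V := by
      rw [hB]
      simp only
      rw [Measure.addHaar_ball volume _ (by positivity : (0:ℝ) ≤ t k / 2)]
      rw [ENNReal.toReal_mul, ENNReal.toReal_ofReal (by positivity), finrank_euclideanSpace_fin]
    have hlb := setIntegral_ge_of_const_le measurableSet_ball measure_ball_lt_top.ne
      (hglow k hk) (hgInt.mono_set (hsubA k))
    change (volume (B k)).toReal • (c0 / t k ^ 3) ≤ _ at hlb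
    rw [hvol] at hlb
    refine le_trans (le_of_eq ?_) hlb
    rw [smul_eq_mul, hc1, hc0]
    field_simp
    ring
  -- assemble
  have hUsub : (⋃ k ∈ Finset.range (K+1), B k) ⊆ A := Set.iUnion₂_subset fun k _ => hsubA k
  have hsum : ∫ x in ⋃ k ∈ Finset.range (K+1), B k, g x
      = ∑ k ∈ Finset.range (K+1), ∫ x in B k, g x :=
    integral_biUnion_finset _ (fun k _ => measurableSet_ball) hdisj
      (fun k _ => hgInt.mono_set (hsubA k))
  have hmono : ∫ x in ⋃ k ∈ Finset.range (K+1), B k, g x ≤ ∫ x in A, g x :=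
    setIntegral_mono_set hgInt (Filter.Eventually.of_forall hgnn)
      (HasSubset.Subset.eventuallyLE hUsub)
  have hcard : c1 * ((K:ℝ)+1) ≤ ∑ k ∈ Finset.range (K+1), ∫ x in B k, g x := by
    calc c1 * ((K:ℝ)+1) = ∑ _k ∈ Finset.range (K+1), c1 := by
          rw [Finset.sum_const, Finset.card_range, nsmul_eq_mul]
          push_cast
          ring
      _ ≤ ∑ k ∈ Finset.range (K+1), ∫ x in B k, g x :=
          Finset.sum_le_sum fun k hk => hball k (Nat.lt_succ_iff.mp (Finset.mem_range.mp hk))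
  have hlog : Real.log j / (2 * Real.log 2) ≤ (K:ℝ) + 1 := by
    have hup : Real.log j < ((N:ℝ)+1) * Real.log 2 := by
      have hlt : (j:ℝ) < 2^(N+1) := by exact_mod_cast Nat.lt_pow_succ_log_self one_lt_two j
      calc Real.log j < Real.log (2^(N+1)) := Real.log_lt_log hjRpos hlt
        _ = ((N:ℝ)+1) * Real.log 2 := by rw [Real.log_pow]; push_cast; ring
    have hlo : 2 * (m:ℝ) * Real.log 2 ≤ Real.log j := by
      have h1 : ((2:ℝ))^(2*m) ≤ (j:ℝ) := by exact_mod_cast hj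
      calc 2 * (m:ℝ) * Real.log 2 = Real.log ((2:ℝ)^(2*m)) := by
            rw [Real.log_pow]; push_cast; ring
        _ ≤ Real.log j := Real.log_le_log (by positivity) h1
    have hKcast : (K:ℝ) = (N:ℝ) - (m:ℝ) := by
      rw [hK, Nat.cast_sub hmN]
    rw [hKcast, div_le_iff₀ (by positivity)]
    nlinarith
  have hbig : c1 / (2 * Real.log 2) * Real.log j ≤ ∫ x in A, g x := by
    calc c1 / (2 * Real.log 2) * Real.log j
        = c1 * (Real.log j / (2 * Real.log 2)) := by ring
      _ ≤ c1 * ((K:ℝ)+1) := mul_le_mul_of_nonneg_left hlog hc1pos.le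
      _ ≤ ∑ k ∈ Finset.range (K+1), ∫ x in B k, g x := hcard
      _ = ∫ x in ⋃ k ∈ Finset.range (K+1), B k, g x := hsum.symm
      _ ≤ ∫ x in A, g x := hmono
  calc c1 / (2 * Real.log 2) * Real.log j ≤ ∫ x in A, g x := hbig
    _ = ∫ x in A, ‖x‖ * |fderiv ℝ (fun z => Phi0 z (xj δ j)) x (EuclideanSpace.single 2 1)| ^ 2 :=
        (setIntegral_congr_fun hAmeas hEq).symm
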